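/- For the matrix X_s (s ≥ 2) and φ = X_s^{-1} e₁ ∈ ℝ^s: if s is odd then the first two components are φ₀ = ξ₀^{-1} and φ₁ = 0, while if s is even then φ₀ = 0 and φ₁ = −ξ₁^{-1}. (Components indexed from 0.) -/

import Mathlib

open Matrix

/-- `ξ_i = 1/(2√|4i²−1|)`. -/
noncomputable def xi (i : ℕ) : ℝ := 1 / (2 * Real.sqrt |4 * (i:ℝ)^2 - 1|)

/-- The tridiagonal matrix `X_s`. -/
noncomputable def Xmat (s : ℕ) : Matrix (Fin s) (Fin s) ℝ :=
  Matrix.of fun i j =>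
    if i.val = 0 ∧ j.val = 0 then xi 0
    else if i.val = j.val + 1 then xi i.val
    else if j.val = i.val + 1 then -xi j.val
    else 0

lemma xi_pos (i : ℕ) : 0 < xi i := by
  have h : (0:ℝ) < |4 * (i:ℝ)^2 - 1| := by
    rcases Nat.eq_zero_or_pos i with h | h
    · subst h; norm_num
    · have : (1:ℝ) ≤ (i:ℝ) := by exact_mod_cast h
      rw [abs_pos]; nlinarith
  unfold xi
  positivity

lemma Xmat_00 {s : ℕ} {i j : Fin s} (hi : i.val = 0) (hj : j.val = 0) :
    Xmat s i j = xi 0 := by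
  simp only [Xmat, Matrix.of_apply]; rw [if_pos ⟨hi, hj⟩]

lemma Xmat_sub {s : ℕ} {i j : Fin s} (h : i.val = j.val + 1) :
    Xmat s i j = xi i.val := by
  simp only [Xmat, Matrix.of_apply]; rw [if_neg (by omega), if_pos h]

lemma Xmat_sup {s : ℕ} {i j : Fin s} (h : j.val = i.val + 1) :
    Xmat s i j = -xi j.val := by
  simp only [Xmat, Matrix.of_apply]
  rw [if_neg (by omega), if_neg (by omega), if_pos h]

lemma Xmat_zero {s : ℕ} {i j : Fin s} (h1 : ¬(i.val = 0 ∧ j.val = 0))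
    (h2 : i.val ≠ j.val + 1) (h3 : j.val ≠ i.val + 1) : Xmat s i j = 0 := by
  simp only [Xmat, Matrix.of_apply]; rw [if_neg h1, if_neg h2, if_neg h3]

noncomputable def psi (a b : ℝ) : ℕ → ℝ
  | 0 => a
  | 1 => b
  | (n+2) => (xi (n+1) / xi (n+2)) * psi a b n

lemma psi_odd (a : ℝ) : ∀ n, psi a 0 (2*n+1) = 0 := by
  intro n
  induction n with
  | zero => rfl
  | succ k ih =>
      have h : 2*(k+1)+1 = (2*k+1)+2 := by ring
      rw [h, psi, ih, mul_zero]

lemma psi_even (b : ℝ) : ∀ n, psi 0 b (2*n) = 0 := by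
  intro n
  induction n with
  | zero => rfl
  | succ k ih =>
      have h : 2*(k+1) = (2*k)+2 := by ring
      rw [h, psi, ih, mul_zero]

lemma sum_two {n : ℕ} (f : Fin n → ℝ) (j₀ j₁ : Fin n) (h : j₀ ≠ j₁)
    (hz : ∀ j, j ≠ j₀ → j ≠ j₁ → f j = 0) : ∑ j, f j = f j₀ + f j₁ := by
  rw [← Finset.sum_pair h]
  symm
  apply Finset.sum_subset (Finset.subset_univ _)
  intro x _ hx
  simp only [Finset.mem_insert, Finset.mem_singleton, not_or] at hx
  exact hz x hx.1 hx.2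

lemma sum_one {n : ℕ} (f : Fin n → ℝ) (j₀ : Fin n)
    (hz : ∀ j, j ≠ j₀ → f j = 0) : ∑ j, f j = f j₀ :=
  Finset.sum_eq_single j₀ (fun j _ hj => hz j hj) (by simp)

set_option maxHeartbeats 2000000 in
lemma key (s : ℕ) (hs : 2 ≤ s) (a b : ℝ) (hab : xi 0 * a - xi 1 * b = 1)
    (hz : psi a b (s-2) = 0) :
    (Xmat s).mulVec (fun i => psi a b i.val) = Pi.single (⟨0, Nat.zero_lt_of_lt hs⟩ : Fin s) 1 := by
  funext i
  rw [Matrix.mulVec, dotProduct]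
  rcases Nat.eq_zero_or_pos i.val with h0 | hpos
  · -- row 0
    have h1 : (1:ℕ) < s := by omega
    have e0 : ((⟨0, by omega⟩ : Fin s)).val = 0 := rfl
    have e1 : ((⟨1, h1⟩ : Fin s)).val = 1 := rfl
    rw [sum_two _ (⟨0, by omega⟩ : Fin s) (⟨1, h1⟩ : Fin s)
      (by intro h; rw [Fin.ext_iff, e0, e1] at h; omega)
      (by
        intro j hj0 hj1
        have hj0' : j.val ≠ 0 := by
          intro h; exact hj0 (by rw [Fin.ext_iff, e0, h])
        have hj1' : j.val ≠ 1 := by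
          intro h; exact hj1 (by rw [Fin.ext_iff, e1, h])
        rw [Xmat_zero (by omega) (by omega) (by omega), zero_mul])]
    rw [Xmat_00 h0 e0, Xmat_sup (by rw [e1, h0])]
    have h0' : i = (⟨0, by omega⟩ : Fin s) := Fin.ext h0
    rw [h0', Pi.single_eq_same, e0, e1]
    show xi 0 * psi a b 0 + -xi 1 * psi a b 1 = 1
    simp only [psi]
    linarith
  · have hne : i ≠ (⟨0, by omega⟩ : Fin s) := by
      intro h
      have : i.val = 0 := by rw [h]
      omega
    rw [Pi.single_eq_of_ne hne]
    have hle : i.val ≤ s - 1 := by omega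
    rcases eq_or_lt_of_le hle with hlast | hmid
    · -- last row, i.val = s - 1
      have em : ((⟨i.val - 1, by omega⟩ : Fin s)).val = i.val - 1 := rfl
      rw [sum_one _ (⟨i.val - 1, by omega⟩ : Fin s)
        (by
          intro j hj
          have hj' : j.val ≠ i.val - 1 := by
            intro h; exact hj (by rw [Fin.ext_iff, em, h])
          rw [Xmat_zero (by omega) (by omega) (by omega), zero_mul])]
      rw [Xmat_sub (by rw [em]; omega), em]
      have h2 : i.val - 1 = s - 2 := by omega
      rw [h2, hz, mul_zero]
    · -- middle row: 1 ≤ i.val ≤ s - 2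
      have hlt : i.val + 1 < s := by omega
      have em : ((⟨i.val - 1, by omega⟩ : Fin s)).val = i.val - 1 := rfl
      have ep : ((⟨i.val + 1, hlt⟩ : Fin s)).val = i.val + 1 := rfl
      rw [sum_two _ (⟨i.val - 1, by omega⟩ : Fin s) (⟨i.val + 1, hlt⟩ : Fin s)
        (by intro h; rw [Fin.ext_iff, em, ep] at h; omega)
        (by
          intro j hj0 hj1
          have hj0' : j.val ≠ i.val - 1 := by
            intro h; exact hj0 (by rw [Fin.ext_iff, em, h])
          have hj1' : j.val ≠ i.val + 1 := by
            intro h; exact hj1 (by rw [Fin.ext_iff, ep, h])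
          rw [Xmat_zero (by omega) (by omega) (by omega), zero_mul])]
      rw [Xmat_sub (by rw [em]; omega), Xmat_sup (by rw [ep]), em, ep]
      show xi i.val * psi a b (i.val - 1) + -xi (i.val + 1) * psi a b (i.val + 1) = 0
      have hrec : i.val + 1 = (i.val - 1) + 2 := by omega
      rw [hrec, psi]
      have hx : xi ((i.val - 1) + 1) = xi i.val := by congr 1; omega
      rw [hx]
      field_simp [(xi_pos (i.val - 1 + 2)).ne']
      ring


/-- for `s ≥ 2` and `φ = X_s⁻¹ e₁`: if `s` is odd then
`φ₀ = ξ₀⁻¹` and `φ₁ = 0`; if `s` is even then `φ₀ = 0` and `φ₁ = −ξ₁⁻¹`. -/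
theorem Xinv_e1_leading_entries (s : ℕ) (hs : 2 ≤ s)
    (hdet : IsUnit (Xmat s).det) :
    let φ := (Xmat s)⁻¹.mulVec (Pi.single (⟨0, by omega⟩ : Fin s) (1:ℝ))
    (Odd s → φ ⟨0, by omega⟩ = (xi 0)⁻¹ ∧ φ ⟨1, by omega⟩ = 0) ∧
    (Even s → φ ⟨0, by omega⟩ = 0 ∧ φ ⟨1, by omega⟩ = -(xi 1)⁻¹) := by
  intro φ
  have main : ∀ a b : ℝ, xi 0 * a - xi 1 * b = 1 → psi a b (s-2) = 0 →
      φ = fun i : Fin s => psi a b i.val := by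
    intro a b hab hz
    have h := key s hs a b hab hz
    show (Xmat s)⁻¹.mulVec _ = _
    rw [← h, Matrix.mulVec_mulVec, Matrix.nonsing_inv_mul _ hdet, Matrix.one_mulVec]
  constructor
  · intro hodd
    obtain ⟨k, hk⟩ := hodd
    have hab : xi 0 * (xi 0)⁻¹ - xi 1 * 0 = 1 := by
      rw [mul_inv_cancel₀ (xi_pos 0).ne', mul_zero, sub_zero]
    have hz : psi ((xi 0)⁻¹) 0 (s-2) = 0 := by
      have h : s - 2 = 2*(k-1)+1 := by omega
      rw [h, psi_odd]
    rw [main _ _ hab hz]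
    exact ⟨rfl, rfl⟩
  · intro heven
    obtain ⟨k, hk⟩ := heven
    have hab : xi 0 * 0 - xi 1 * (-(xi 1)⁻¹) = 1 := by
      rw [mul_zero, zero_sub, mul_neg, neg_neg, mul_inv_cancel₀ (xi_pos 1).ne']
    have hz : psi 0 (-(xi 1)⁻¹) (s-2) = 0 := by
      have h : s - 2 = 2*(k-1) := by omega
      rw [h, psi_even]
    rw [main _ _ hab hz]
    exact ⟨rfl, rfl⟩
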